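/- With L, λ, f as in the one-dimensional grafting construction, the complement in (0, 1+λ((0,1))) of U' = ⋃ₙ (aₙ + f(aₙ), bₙ + f(aₙ)) is a closed set with empty interior whose Lebesgue measure equals the total mass |λ| = λ((0,1)) (a 'fat Cantor set'). -/

import Mathlib

open MeasureTheory Set

lemma disj_Ioo_aux {p q r s : ℝ} (h : q ≤ r) : Disjoint (Ioo p q) (Ioo r s) := by
  rw [Set.disjoint_left]
  intro t ht1 ht2
  have := ht1.2
  have := ht2.1
  linarith

/-- One-dimensional grafting: with `L`, `λ`, `f` as in the construction, the complement
`Ĺ` in `(0, 1+|λ|)` of `U' = ⋃ₙ (aₙ + f(aₙ), bₙ + f(aₙ))` is closed in `(0, 1+|λ|)`,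
has empty interior, and has Lebesgue measure equal to the total mass `|λ| = λ((0,1))`
(a fat Cantor set). -/
theorem statement_3 (L : Set ℝ) (a b : ℕ → ℝ) (lam : Measure ℝ) [IsFiniteMeasure lam]
    (hL : L ⊆ Ioo (0:ℝ) 1)
    (hclosed : ∃ C : Set ℝ, IsClosed C ∧ L = C ∩ Ioo (0:ℝ) 1)
    (hint : interior L = ∅)
    (hnull : volume L = 0)
    (hab : ∀ n, a n < b n)
    (hcompl : Ioo (0:ℝ) 1 \ L = ⋃ n, Ioo (a n) (b n))
    (hdisj : Pairwise (Function.onFun Disjoint fun n => Ioo (a n) (b n)))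
    (hconc : lam Lᶜ = 0)
    (hatomless : ∀ x : ℝ, lam {x} = 0)
    (f : ℝ → ℝ) (hf : ∀ x, f x = (lam (Ioo 0 x)).toReal)
    (M : ℝ) (hM : M = (lam (Ioo (0:ℝ) 1)).toReal)
    (Lhat : Set ℝ)
    (hLhat : Lhat = Ioo (0:ℝ) (1 + M) \ ⋃ n, Ioo (a n + f (a n)) (b n + f (a n))) :
    (∃ C : Set ℝ, IsClosed C ∧ Lhat = C ∩ Ioo (0:ℝ) (1 + M)) ∧
    interior Lhat = ∅ ∧
    volume Lhat = ENNReal.ofReal M := by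
  have hM0 : 0 ≤ M := by rw [hM]; exact ENNReal.toReal_nonneg
  have hz : ∀ s : Set ℝ, s ⊆ Lᶜ → lam s = 0 := fun s hs => measure_mono_null hs hconc
  have hfmono : Monotone f := by
    intro u v huv
    rw [hf, hf]
    exact ENNReal.toReal_mono (measure_ne_top _ _)
      (measure_mono (Ioo_subset_Ioo_right huv))
  have key : ∀ u v : ℝ, f v ≤ f u + (lam (Ico u v)).toReal := by
    intro u v
    rw [hf, hf]
    have hsub : Ioo 0 v ⊆ Ioo 0 u ∪ Ico u v := by
      rintro t ⟨h1, h2⟩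
      rcases lt_or_ge t u with h | h
      · exact Or.inl ⟨h1, h⟩
      · exact Or.inr ⟨h, h2⟩
    calc (lam (Ioo 0 v)).toReal ≤ (lam (Ioo 0 u) + lam (Ico u v)).toReal :=
          ENNReal.toReal_mono (by finiteness)
            ((measure_mono hsub).trans (measure_union_le _ _))
      _ = _ := ENNReal.toReal_add (measure_ne_top _ _) (measure_ne_top _ _)
  have keq : ∀ u v : ℝ, u ≤ v → lam (Ico u v) = 0 → f v = f u := by
    intro u v huv h0
    refine le_antisymm ?_ (hfmono huv)
    have h1 := key u v
    rw [h0] at h1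
    simpa using h1
  have hIco0 : ∀ u v : ℝ, Ioo u v ⊆ Lᶜ → lam (Ico u v) = 0 := by
    intro u v hsub
    have hsub2 : Ico u v ⊆ {u} ∪ Ioo u v := by
      rintro t ⟨h1, h2⟩
      rcases eq_or_lt_of_le h1 with h | h
      · exact Or.inl (by simp [h.symm])
      · exact Or.inr ⟨h, h2⟩
    have h1 : lam (Ico u v) ≤ lam {u} + lam (Ioo u v) :=
      (measure_mono hsub2).trans (measure_union_le _ _)
    rw [hatomless, hz _ hsub, add_zero] at h1
    exact le_antisymm h1 zero_le
  have hsubn : ∀ n, Ioo (a n) (b n) ⊆ Ioo (0:ℝ) 1 := by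
    intro n
    refine (subset_iUnion (fun n => Ioo (a n) (b n)) n).trans ?_
    rw [← hcompl]; exact diff_subset
  have hLcompn : ∀ n, Ioo (a n) (b n) ⊆ Lᶜ := by
    intro n
    refine (subset_iUnion (fun n => Ioo (a n) (b n)) n).trans ?_
    rw [← hcompl]
    intro t ht
    exact ht.2
  have habn : ∀ n, 0 ≤ a n ∧ b n ≤ 1 := fun n => (Ioo_subset_Ioo_iff (hab n)).mp (hsubn n)
  have hfab : ∀ n, ∀ x, a n ≤ x → x ≤ b n → f x = f (a n) := by
    intro n x h1 h2
    exact keq _ _ h1 (hIco0 _ _ fun t ht => hLcompn n ⟨ht.1, lt_of_lt_of_le ht.2 h2⟩)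
  have hf0 : f 0 = 0 := by rw [hf]; simp
  have hf1 : f 1 = M := by rw [hf, hM]
  have hfnn : ∀ x, 0 ≤ f x := fun x => by rw [hf]; exact ENNReal.toReal_nonneg
  set g : ℝ → ℝ := fun x => x + f x with hg
  have hgmono : StrictMono g := fun u v huv => add_lt_add_of_lt_of_le huv (hfmono huv.le)
  have hfbn : ∀ n, b n + f (a n) = g (b n) := by
    intro n
    rw [hg]
    simp only
    rw [hfab n (b n) (hab n).le le_rfl]
  have hg0 : g 0 = 0 := by rw [hg]; simp [hf0]
  have hg1 : g 1 = 1 + M := by rw [hg]; simp [hf1]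
  -- continuity of f
  have hfc : Continuous f := by
    rw [Metric.continuous_iff]
    intro x ε hε
    set s : ℕ → Set ℝ := fun n => Icc (x - 1/((n:ℝ)+1)) (x + 1/((n:ℝ)+1)) with hs
    have hmeas : ∀ n : ℕ, NullMeasurableSet (s n) lam := fun n =>
      measurableSet_Icc.nullMeasurableSet
    have hanti : Antitone s := by
      intro m n hmn
      have h1 : (1:ℝ)/((n:ℝ)+1) ≤ 1/((m:ℝ)+1) := by
        apply one_div_le_one_div_of_le
        · positivity
        · exact_mod_cast add_le_add_left (Nat.cast_le.mpr hmn) 1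
      apply Icc_subset_Icc <;> linarith
    have hiInter : (⋂ n : ℕ, s n) = {x} := by
      apply subset_antisymm
      · intro t ht
        simp only [hs, mem_iInter, mem_Icc] at ht
        have h1 : ∀ n : ℕ, |t - x| ≤ 1/((n:ℝ)+1) := by
          intro n
          rw [abs_sub_le_iff]
          constructor <;> linarith [(ht n).1, (ht n).2]
        have h2 : |t - x| ≤ 0 :=
          ge_of_tendsto' tendsto_one_div_add_atTop_nhds_zero_nat fun n => h1 n
        have h3 : t - x = 0 := by
          have := abs_nonneg (t - x)
          have : |t - x| = 0 := le_antisymm h2 this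
          exact abs_eq_zero.mp this
        simp [show t = x by linarith]
      · intro t ht
        simp only [mem_singleton_iff] at ht
        subst ht
        simp only [hs, mem_iInter, mem_Icc]
        intro n
        have : (0:ℝ) < 1/((n:ℝ)+1) := by positivity
        constructor <;> linarith
    have htend := tendsto_measure_iInter_atTop hmeas hanti ⟨0, measure_ne_top _ _⟩
    rw [hiInter, hatomless] at htend
    have hev : ∀ᶠ n in Filter.atTop, lam (s n) < ENNReal.ofReal ε :=
      htend.eventually_lt_const (ENNReal.ofReal_pos.mpr hε)
    obtain ⟨n, hn⟩ := hev.exists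
    set δ : ℝ := 1/((n:ℝ)+1) with hδ
    have hδpos : 0 < δ := by positivity
    refine ⟨δ, hδpos, ?_⟩
    intro y hy
    rw [Real.dist_eq] at hy
    have hy1 : y - x < δ := (abs_sub_lt_iff.mp hy).1
    have hy2 : x - y < δ := (abs_sub_lt_iff.mp hy).2
    have hbound : (lam (s n)).toReal < ε :=
      (ENNReal.lt_ofReal_iff_toReal_lt (measure_ne_top _ _)).mp hn
    have hmain : |f y - f x| ≤ (lam (s n)).toReal := by
      rcases le_total x y with h | h
      · have h1 : f x ≤ f y := hfmono h
        have h2 : f y ≤ f x + (lam (s n)).toReal := by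
          refine (key x y).trans (add_le_add_right ?_ _)
          refine ENNReal.toReal_mono (measure_ne_top _ _) (measure_mono ?_)
          rintro t ⟨ht1, ht2⟩
          exact ⟨by linarith, by linarith⟩
        rw [abs_sub_le_iff]
        constructor <;> linarith [ENNReal.toReal_nonneg (a := lam (s n))]
      · have h1 : f y ≤ f x := hfmono h
        have h2 : f x ≤ f y + (lam (s n)).toReal := by
          refine (key y x).trans (add_le_add_right ?_ _)
          refine ENNReal.toReal_mono (measure_ne_top _ _) (measure_mono ?_)
          rintro t ⟨ht1, ht2⟩
          exact ⟨by linarith, by linarith⟩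
        rw [abs_sub_le_iff]
        constructor <;> linarith [ENNReal.toReal_nonneg (a := lam (s n))]
    rw [Real.dist_eq]
    exact lt_of_le_of_lt hmain hbound
  have hgc : Continuous g := continuous_id.add hfc
  refine ⟨⟨(⋃ n, Ioo (a n + f (a n)) (b n + f (a n)))ᶜ,
      (isOpen_iUnion fun n => isOpen_Ioo).isClosed_compl, by
        rw [hLhat, diff_eq, inter_comm]⟩, ?_, ?_⟩
  · -- interior empty
    rw [eq_empty_iff_forall_notMem]
    intro y hy
    obtain ⟨c, d, hycd, hcd⟩ := mem_nhds_iff_exists_Ioo_subset.mp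
      (isOpen_interior.mem_nhds hy)
    have hcdL : Ioo c d ⊆ Lhat := hcd.trans interior_subset
    have hVopen : IsOpen (g ⁻¹' Ioo c d) := isOpen_Ioo.preimage hgc
    have hVL : g ⁻¹' Ioo c d ⊆ L := by
      intro x hx
      have hgx : g x ∈ Lhat := hcdL hx
      rw [hLhat] at hgx
      have hx0 : 0 < x := hgmono.lt_iff_lt.mp (by rw [hg0]; exact hgx.1.1)
      have hx1 : x < 1 := hgmono.lt_iff_lt.mp (by rw [hg1]; exact hgx.1.2)
      have hxnot : x ∉ ⋃ n, Ioo (a n) (b n) := by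
        intro hxU
        obtain ⟨n, hxn⟩ := mem_iUnion.mp hxU
        apply hgx.2
        refine mem_iUnion.mpr ⟨n, ?_⟩
        have hfx : f x = f (a n) := hfab n x hxn.1.le hxn.2.le
        have hgxe : g x = x + f (a n) := by rw [hg]; simp only; rw [hfx]
        rw [hgxe]
        exact ⟨by linarith [hxn.1], by linarith [hxn.2]⟩
      have hxL : x ∈ Ioo (0:ℝ) 1 \ ⋃ n, Ioo (a n) (b n) := ⟨⟨hx0, hx1⟩, hxnot⟩
      rwa [← hcompl, diff_diff_cancel_left hL] at hxL
    have hVne : (g ⁻¹' Ioo c d).Nonempty := by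
      have hyL : y ∈ Lhat := hcdL hycd
      rw [hLhat] at hyL
      have hy' : y ∈ Ioo (g 0) (g 1) := by rw [hg0, hg1]; exact hyL.1
      obtain ⟨x, _, hgx⟩ := intermediate_value_Ioo (by norm_num : (0:ℝ) ≤ 1)
        hgc.continuousOn hy'
      exact ⟨x, by simp [hgx, hycd]⟩
    have hsubint : g ⁻¹' Ioo c d ⊆ interior L := interior_maximal hVL hVopen
    rw [hint] at hsubint
    exact absurd (hsubint hVne.some_mem) (notMem_empty _)
  · -- volume
    have hmeasL : MeasurableSet L := by
      obtain ⟨C, hC, rfl⟩ := hclosed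
      exact hC.measurableSet.inter measurableSet_Ioo
    have horder : ∀ m n, m ≠ n → b m ≤ a n ∨ b n ≤ a m := by
      intro m n hmn
      by_contra h
      push_neg at h
      set t : ℝ := (max (a m) (a n) + min (b m) (b n)) / 2 with ht
      have h1 := le_max_left (a m) (a n)
      have h2 := le_max_right (a m) (a n)
      have h3 := min_le_left (b m) (b n)
      have h4 := min_le_right (b m) (b n)
      have hmaxmin : max (a m) (a n) < min (b m) (b n) := by
        exact max_lt_iff.mpr ⟨lt_min_iff.mpr ⟨hab m, h.2⟩, lt_min_iff.mpr ⟨h.1, hab n⟩⟩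
      have htm : t ∈ Ioo (a m) (b m) := ⟨by rw [ht]; linarith, by rw [ht]; linarith⟩
      have htn : t ∈ Ioo (a n) (b n) := ⟨by rw [ht]; linarith, by rw [ht]; linarith⟩
      exact Set.disjoint_left.mp (hdisj hmn) htm htn
    have hdisj2 : Pairwise (Function.onFun Disjoint
        fun n => Ioo (a n + f (a n)) (b n + f (a n))) := by
      intro m n hmn
      rcases horder m n hmn with h | h
      · refine disj_Ioo_aux ?_
        calc b m + f (a m) = g (b m) := hfbn m
          _ ≤ g (a n) := hgmono.monotone h
          _ = a n + f (a n) := rfl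
      · refine (disj_Ioo_aux ?_).symm
        calc b n + f (a n) = g (b n) := hfbn n
          _ ≤ g (a m) := hgmono.monotone h
          _ = a m + f (a m) := rfl
    have hvolU : volume (⋃ n, Ioo (a n + f (a n)) (b n + f (a n))) = 1 := by
      rw [measure_iUnion hdisj2 fun n => measurableSet_Ioo]
      have hcong : ∀ n, volume (Ioo (a n + f (a n)) (b n + f (a n)))
          = volume (Ioo (a n) (b n)) := by
        intro n
        rw [Real.volume_Ioo, Real.volume_Ioo]
        ring_nf
      rw [tsum_congr hcong, ← measure_iUnion hdisj fun n => measurableSet_Ioo, ← hcompl,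
        measure_diff hL hmeasL.nullMeasurableSet (by rw [hnull]; exact ENNReal.zero_ne_top),
        hnull, Real.volume_Ioo, tsub_zero]
      norm_num
    have hUsub : (⋃ n, Ioo (a n + f (a n)) (b n + f (a n))) ⊆ Ioo 0 (1 + M) := by
      intro t ht
      obtain ⟨n, htn⟩ := mem_iUnion.mp ht
      constructor
      · have := (habn n).1
        have := hfnn (a n)
        linarith [htn.1]
      · have hgb : b n + f (a n) ≤ 1 + M := by
          rw [hfbn n, ← hg1]
          exact hgmono.monotone (habn n).2
        linarith [htn.2]
    rw [hLhat, measure_diff hUsub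
      (MeasurableSet.iUnion fun n => measurableSet_Ioo).nullMeasurableSet
      (by rw [hvolU]; exact ENNReal.one_ne_top), hvolU, Real.volume_Ioo]
    have hofr : ENNReal.ofReal (1 + M - 0) = 1 + ENNReal.ofReal M := by
      rw [sub_zero, ENNReal.ofReal_add (by norm_num) hM0, ENNReal.ofReal_one]
    rw [hofr, ENNReal.add_sub_cancel_left ENNReal.one_ne_top]
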